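/- For every integer n ≥ 1, the degree-n Legendre polynomial P_n has exactly n roots, all of which are real, simple (distinct), and lie in the open interval (−1, 1). -/
import Mathlib

/-- The Legendre polynomial of degree `n` on `[−1,1]`, via the Rodrigues formula
`P_n(y) = (1/(2^n n!)) (d/dy)^n [(y² − 1)^n]`. -/
noncomputable def legendreP (n : ℕ) (y : ℝ) : ℝ :=
  (1 / ((2 : ℝ) ^ n * (n.factorial : ℝ))) * iteratedDeriv n (fun z : ℝ => (z ^ 2 - 1) ^ n) y

open Polynomial Finset

namespace LegendreAux

/-- `(X² − 1)^n` as a polynomial. -/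
noncomputable def Q (n : ℕ) : ℝ[X] := ((X : ℝ[X]) ^ 2 - 1) ^ n

/-- Its `k`-th derivative. -/
noncomputable def D (n k : ℕ) : ℝ[X] := derivative^[k] (Q n)

lemma iteratedDeriv_polyEval (p : ℝ[X]) (k : ℕ) :
    iteratedDeriv k (fun x : ℝ => p.eval x) = fun x => (derivative^[k] p).eval x := by
  induction k with
  | zero => simp
  | succ k ih =>
    rw [iteratedDeriv_succ, ih, Function.iterate_succ_apply']
    funext x
    exact Polynomial.deriv (p := derivative^[k] p)

lemma legendreP_eq (n : ℕ) :
    legendreP n = fun y => (1 / ((2 : ℝ) ^ n * (n.factorial : ℝ))) * (D n n).eval y := by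
  funext y
  have h : (fun z : ℝ => (z ^ 2 - 1) ^ n) = fun z : ℝ => (Q n).eval z := by
    funext z; simp [Q]
  rw [legendreP, h, iteratedDeriv_polyEval]
  rfl

lemma const_ne_zero (n : ℕ) : (1 / ((2 : ℝ) ^ n * (n.factorial : ℝ))) ≠ 0 := by
  positivity

lemma natDegree_D {n k : ℕ} (hk : k ≤ n) : (D n k).natDegree = 2 * n - k := by
  induction k with
  | zero =>
    simp only [D, Function.iterate_zero_apply, Q]
    have h2 : ((X : ℝ[X]) ^ 2 - 1).natDegree = 2 := by
      compute_degree!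
    rw [natDegree_pow, h2]
    omega
  | succ k ih =>
    have hk' : k ≤ n := Nat.le_of_succ_le hk
    have hdeg : (D n k).natDegree = 2 * n - k := ih hk'
    have hpos : 0 < (D n k).natDegree := by omega
    have : D n (k + 1) = derivative (D n k) := Function.iterate_succ_apply' _ _ _
    rw [this, natDegree_eq_of_degree_eq_some (degree_derivative_eq _ hpos), hdeg]
    omega

lemma D_ne_zero {n k : ℕ} (hn : 1 ≤ n) (hk : k ≤ n) : D n k ≠ 0 := by
  intro h
  have := natDegree_D hk
  rw [h, natDegree_zero] at this
  omega

lemma dvd_D (n k : ℕ) (a : ℝ) (ha : ((X : ℝ[X]) - C a) ^ n ∣ Q n) :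
    ((X : ℝ[X]) - C a) ^ (n - k) ∣ D n k :=
  pow_sub_dvd_iterate_derivative_of_pow_dvd k ha

lemma Q_factor (n : ℕ) : Q n = ((X : ℝ[X]) - C 1) ^ n * ((X : ℝ[X]) - C (-1)) ^ n := by
  rw [Q, ← mul_pow]
  congr 1
  simp only [map_one, map_neg]
  ring

lemma one_root_D {n k : ℕ} (hk : k < n) : (D n k).eval 1 = 0 := by
  have h : ((X : ℝ[X]) - C 1) ^ (n - k) ∣ D n k :=
    dvd_D n k 1 (by rw [Q_factor]; exact dvd_mul_right _ _)
  have h1 : ((X : ℝ[X]) - C 1) ∣ D n k :=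
    dvd_trans (dvd_pow_self _ (by omega)) h
  exact (dvd_iff_isRoot).1 h1

lemma neg_one_root_D {n k : ℕ} (hk : k < n) : (D n k).eval (-1) = 0 := by
  have h : ((X : ℝ[X]) - C (-1)) ^ (n - k) ∣ D n k :=
    dvd_D n k (-1) (by rw [Q_factor]; exact dvd_mul_left _ _)
  have h1 : ((X : ℝ[X]) - C (-1)) ∣ D n k :=
    dvd_trans (dvd_pow_self _ (by omega)) h
  have := (dvd_iff_isRoot).1 h1
  simpa using this

/-- Distinct roots of `D n k` inside the closed interval. -/
noncomputable def R (n k : ℕ) : Finset ℝ :=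
  (D n k).roots.toFinset.filter (· ∈ Set.Icc (-1 : ℝ) 1)

/-- Distinct roots of `D n k` inside the open interval. -/
noncomputable def Ro (n k : ℕ) : Finset ℝ :=
  (D n k).roots.toFinset.filter (· ∈ Set.Ioo (-1 : ℝ) 1)

lemma endpoints_mem_R {n k : ℕ} (hk : k < n) : (-1 : ℝ) ∈ R n k ∧ (1 : ℝ) ∈ R n k := by
  have hne : D n k ≠ 0 := D_ne_zero (by omega) (by omega)
  constructor <;>
  · rw [R, mem_filter, Multiset.mem_toFinset, mem_roots hne]
    refine ⟨?_, by norm_num⟩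
    first
      | exact neg_one_root_D hk
      | exact one_root_D hk

/-- Rolle step: the number of distinct roots of `D n k` in `[-1,1]` is at most one more than
the number of distinct roots of `D n (k+1)` in `(-1,1)`. -/
lemma rolle_step {n k : ℕ} (hn : 1 ≤ n) (hk : k + 1 ≤ n) :
    (R n k).card ≤ (Ro n (k + 1)).card + 1 := by
  apply Finset.card_le_of_interleaved
  intro x hx y hy hxy _
  rw [R, mem_filter, Multiset.mem_toFinset, mem_roots (D_ne_zero hn (by omega))] at hx hy
  obtain ⟨hxr, hx1, hx2⟩ := hx
  obtain ⟨hyr, hy1, hy2⟩ := hy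
  obtain ⟨z, hz, hz0⟩ := exists_deriv_eq_zero hxy (Polynomial.continuousOn (p := D n k))
    (by rw [hxr, hyr])
  refine ⟨z, ?_, hz.1, hz.2⟩
  have hD : D n (k + 1) = derivative (D n k) := Function.iterate_succ_apply' _ _ _
  have hder : deriv (fun t : ℝ => (D n k).eval t) z = (D n (k + 1)).eval z := by
    rw [Polynomial.deriv, hD]
  rw [Ro, mem_filter, Multiset.mem_toFinset, mem_roots (D_ne_zero hn hk)]
  exact ⟨by rw [IsRoot, ← hder, hz0], lt_of_le_of_lt hx1 hz.1, lt_of_lt_of_le hz.2 hy2⟩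

lemma card_R {n : ℕ} (hn : 1 ≤ n) : ∀ k, k + 1 ≤ n → k + 2 ≤ (R n k).card := by
  intro k
  induction k with
  | zero =>
    intro hk
    obtain ⟨h1, h2⟩ := endpoints_mem_R (n := n) (k := 0) (by omega)
    have : ({-1, 1} : Finset ℝ) ⊆ R n 0 := by
      intro x hx
      simp only [Finset.mem_insert, Finset.mem_singleton] at hx
      rcases hx with rfl | rfl <;> assumption
    calc (2 : ℕ) = ({-1, 1} : Finset ℝ).card := by norm_num
      _ ≤ (R n 0).card := Finset.card_le_card this
  | succ k ih =>
    intro hk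
    have hk' : k + 1 ≤ n := by omega
    have hstep := rolle_step hn hk'
    have hcard : k + 2 ≤ (R n k).card := ih (by omega)
    -- R n (k+1) contains Ro n (k+1) together with both endpoints
    obtain ⟨hm1, hp1⟩ := endpoints_mem_R (n := n) (k := k + 1) (by omega)
    have hsub : insert (-1 : ℝ) (insert 1 (Ro n (k + 1))) ⊆ R n (k + 1) := by
      intro x hx
      simp only [Finset.mem_insert] at hx
      rcases hx with rfl | rfl | hx
      · exact hm1
      · exact hp1
      · rw [Ro, mem_filter] at hx
        rw [R, mem_filter]
        exact ⟨hx.1, hx.2.1.le, hx.2.2.le⟩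
    have h1notin : (1 : ℝ) ∉ Ro n (k + 1) := by
      rw [Ro, mem_filter]; rintro ⟨-, -, h⟩; exact lt_irrefl _ h
    have hm1notin : (-1 : ℝ) ∉ insert (1 : ℝ) (Ro n (k + 1)) := by
      simp only [Finset.mem_insert, not_or]
      refine ⟨by norm_num, ?_⟩
      rw [Ro, mem_filter]; rintro ⟨-, h, -⟩; exact lt_irrefl _ h
    have : (Ro n (k + 1)).card + 2 ≤ (R n (k + 1)).card := by
      have := Finset.card_le_card hsub
      rwa [Finset.card_insert_of_notMem hm1notin, Finset.card_insert_of_notMem h1notin] at this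
    omega

/-- The key result: `D n n` has exactly `n` distinct roots, all in `(-1,1)`,
they are all the roots, and they are simple. -/
lemma main (n : ℕ) (hn : 1 ≤ n) :
    (Ro n n).card = n ∧ (D n n).roots.toFinset = Ro n n ∧
      ∀ x ∈ Ro n n, (D n n).rootMultiplicity x = 1 := by
  have hne : D n n ≠ 0 := D_ne_zero hn le_rfl
  have hdeg : (D n n).natDegree = n := by rw [natDegree_D le_rfl]; omega
  have hub : ((D n n).roots.toFinset.card : ℕ) ≤ n := by
    calc (D n n).roots.toFinset.card ≤ Multiset.card (D n n).roots :=
          Multiset.toFinset_card_le _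
      _ ≤ (D n n).natDegree := (D n n).card_roots'
      _ = n := hdeg
  have hRon : n ≤ (Ro n n).card := by
    have h1 : n - 1 + 2 ≤ (R n (n - 1)).card := card_R hn (n - 1) (by omega)
    have h2 : (R n (n - 1)).card ≤ (Ro n (n - 1 + 1)).card + 1 := rolle_step hn (by omega)
    have h3 : n - 1 + 1 = n := by omega
    rw [h3] at h2
    omega
  have hsub : Ro n n ⊆ (D n n).roots.toFinset := Finset.filter_subset _ _
  have hcard : (Ro n n).card = n := le_antisymm ((Finset.card_le_card hsub).trans hub) hRon
  have heq : (D n n).roots.toFinset = Ro n n := by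
    symm
    apply Finset.eq_of_subset_of_card_le hsub
    rw [hcard]; exact hub
  refine ⟨hcard, heq, ?_⟩
  -- all multiplicities are 1
  intro x hx
  by_contra hmult
  have hx' : x ∈ (D n n).roots.toFinset := heq ▸ hx
  have hpos : 1 ≤ (D n n).rootMultiplicity x := by
    rw [← count_roots]
    exact Multiset.one_le_count_iff_mem.2 (Multiset.mem_toFinset.1 hx')
  have h2 : 2 ≤ (D n n).rootMultiplicity x := by omega
  -- sum of multiplicities over distinct roots equals card of roots multiset ≤ n,
  -- but it would be ≥ n + 1
  have hsum : ∑ a ∈ (D n n).roots.toFinset, (D n n).roots.count a =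
      Multiset.card (D n n).roots := Multiset.toFinset_sum_count_eq _
  have hlt : (D n n).roots.toFinset.card < ∑ a ∈ (D n n).roots.toFinset,
      (D n n).roots.count a := by
    rw [Finset.card_eq_sum_ones]
    apply Finset.sum_lt_sum
    · intro i hi
      exact Multiset.one_le_count_iff_mem.2 (Multiset.mem_toFinset.1 hi)
    · exact ⟨x, hx', by rw [count_roots]; omega⟩
  rw [hsum] at hlt
  have : Multiset.card (D n n).roots ≤ n := by
    calc Multiset.card (D n n).roots ≤ (D n n).natDegree := (D n n).card_roots'
      _ = n := hdeg
  rw [heq, hcard] at hlt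
  omega

end LegendreAux

open LegendreAux in
/-- For `n ≥ 1`, the degree-`n` Legendre polynomial has exactly `n` roots, all real,
simple, and lying in the open interval `(−1, 1)`. -/
theorem legendreP_roots (n : ℕ) (hn : 1 ≤ n) :
    ∃ r : Fin n → ℝ, StrictMono r ∧
      (∀ i, r i ∈ Set.Ioo (-1 : ℝ) 1) ∧
      (∀ i, legendreP n (r i) = 0) ∧
      (∀ i, deriv (legendreP n) (r i) ≠ 0) ∧
      (∀ x : ℝ, legendreP n x = 0 → ∃ i, x = r i) := by
  obtain ⟨hcard, heq, hmult⟩ := main n hn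
  have hne : D n n ≠ 0 := D_ne_zero hn le_rfl
  have hc := const_ne_zero n
  set c : ℝ := 1 / ((2 : ℝ) ^ n * (n.factorial : ℝ)) with hc_def
  have hL : legendreP n = fun y => c * (D n n).eval y := legendreP_eq n
  have hmemRo : ∀ x, x ∈ Ro n n ↔ (x ∈ Set.Ioo (-1 : ℝ) 1 ∧ (D n n).eval x = 0) := by
    intro x
    rw [Ro, mem_filter, Multiset.mem_toFinset, mem_roots hne]
    tauto
  -- the strictly monotone enumeration of `Ro n n`
  let e := (Ro n n).orderIsoOfFin hcard
  refine ⟨fun i => (e i : ℝ), ?_, ?_, ?_, ?_, ?_⟩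
  · intro a b hab
    exact Subtype.coe_lt_coe.2 (e.strictMono hab)
  · intro i
    exact ((hmemRo _).1 (e i).2).1
  · intro i
    rw [hL]
    have := ((hmemRo _).1 (e i).2).2
    simp [this]
  · intro i hzero
    have hroot : (D n n).eval ((e i : ℝ)) = 0 := ((hmemRo _).1 (e i).2).2
    have hderiv : deriv (legendreP n) ((e i : ℝ)) =
        c * (derivative (D n n)).eval ((e i : ℝ)) := by
      rw [hL]
      have : (fun y => c * (D n n).eval y) = fun y : ℝ => (C c * D n n).eval y := by
        funext y; simp
      rw [this, Polynomial.deriv, derivative_C_mul]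
      simp
    rw [hderiv, mul_eq_zero] at hzero
    rcases hzero with h | h
    · exact hc h
    · -- derivative vanishes at a simple root: contradiction
      have h1lt : 1 < (D n n).rootMultiplicity ((e i : ℝ)) :=
        (one_lt_rootMultiplicity_iff_isRoot hne).2 ⟨hroot, h⟩
      have := hmult _ (e i).2
      omega
  · intro x hx
    rw [hL] at hx
    have hx0 : (D n n).eval x = 0 := by
      rcases mul_eq_zero.1 hx with h | h
      · exact absurd h hc
      · exact h
    have hxmem : x ∈ Ro n n := by
      rw [← heq, Multiset.mem_toFinset, mem_roots hne]
      exact hx0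
    obtain ⟨i, hi⟩ := e.surjective ⟨x, hxmem⟩
    exact ⟨i, by show x = ↑(e i); rw [hi]⟩
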